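/- Under the stated setup, δ₅ = S₅((r₁, r₂, r₃); λ) − S₅((r₁−1, r₂, r₃+1); λ') satisfies δ₅ ≥ −Σ_{i₂=r₂+1}^{n−r₁−1} a_{i₂} · Σ_{i₃=0}^{n−r₁−1−i₂} binom(r₃+1, i₃) − Σ_{i₂=r₂+1}^{n−r₁} a_{i₂} · C(r₃+α₃, n−r₁−i₂) · Γ(r₁+α₁)/(Γ(r₁+1)·|Γ(α₁)|), where binom(r₃+1, i₃) is the ordinary (natural number) binomial coefficient. -/

import Mathlib

open Finset

/-- Generalized binomial coefficient `C(a,b) = Γ(a+1)/(Γ(b+1)·Γ(a−b+1))`. -/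
noncomputable def genBinom (a b : ℝ) : ℝ :=
  Real.Gamma (a + 1) / (Real.Gamma (b + 1) * Real.Gamma (a - b + 1))

/-- The fundamental Lagrange interpolation polynomial value `l_i(μ)` for
equally spaced nodes of the triangle, degree `n`. -/
noncomputable def lagPoly (n : ℕ) (mu : ℝ × ℝ × ℝ) (i : ℕ × ℕ × ℕ) : ℝ :=
  (Real.Gamma (n * mu.1 + 1) / (i.1.factorial * Real.Gamma (n * mu.1 - i.1 + 1))) *
  (Real.Gamma (n * mu.2.1 + 1) / (i.2.1.factorial * Real.Gamma (n * mu.2.1 - i.2.1 + 1))) *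
  (Real.Gamma (n * mu.2.2 + 1) / (i.2.2.factorial * Real.Gamma (n * mu.2.2 - i.2.2 + 1)))

/-- `S₅((ρ₁,ρ₂,ρ₃); μ) = Σ_{i₂=ρ₂+1}^{n−ρ₁−1} Σ_{i₃=0}^{n−ρ₁−1−i₂} |l_{(n−i₂−i₃, i₂, i₃)}(μ)|`. -/
noncomputable def S5 (n : ℕ) (ρ : ℕ × ℕ × ℕ) (mu : ℝ × ℝ × ℝ) : ℝ :=
  ∑ i₂ ∈ Finset.Icc (ρ.2.1 + 1) (n - ρ.1 - 1), ∑ i₃ ∈ Finset.range (n - ρ.1 - i₂),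
    |lagPoly n mu (n - i₂ - i₃, i₂, i₃)|

noncomputable def Fg (x : ℝ) (k : ℕ) : ℝ :=
  Real.Gamma (x + 1) / (k.factorial * Real.Gamma (x - k + 1))

lemma gamma_prod_add (x : ℝ) (hx : 0 < x) (k : ℕ) :
    Real.Gamma (x + k) = (∏ j ∈ Finset.range k, (x + j)) * Real.Gamma x := by
  induction k with
  | zero => simp
  | succ k ih =>
    have h1 : x + (k+1:ℕ) = (x + k) + 1 := by push_cast; ring
    rw [h1, Real.Gamma_add_one (by positivity), ih, Finset.prod_range_succ]
    ring

lemma gamma_ratio (x : ℝ) (k : ℕ) (h : Real.Gamma (x - k + 1) ≠ 0) :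
    Real.Gamma (x + 1) = (∏ j ∈ Finset.range k, (x - j)) * Real.Gamma (x - k + 1) := by
  induction k with
  | zero => simp
  | succ k ih =>
    have hz : x - k ≠ 0 := by
      intro hz
      rw [show x - (k+1:ℕ) + 1 = x - k by push_cast; ring, hz] at h
      exact h Real.Gamma_zero
    have h' : Real.Gamma (x - k) ≠ 0 := by
      rwa [show x - (k+1:ℕ) + 1 = x - k by push_cast; ring] at h
    have h2 : Real.Gamma (x - k + 1) ≠ 0 := by
      rw [show x - (k:ℕ) + 1 = (x - k) + 1 by ring, Real.Gamma_add_one hz]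
      exact mul_ne_zero hz h'
    rw [ih h2, Finset.prod_range_succ]
    rw [show x - (k:ℕ) + 1 = (x - k) + 1 by ring,
      Real.Gamma_add_one hz, show x - (k+1:ℕ) + 1 = x - k by push_cast; ring]
    ring


lemma Fg_eq_of_ne (x : ℝ) (k : ℕ) (h : Real.Gamma (x - k + 1) ≠ 0) :
    Fg x k = (∏ j ∈ Finset.range k, (x - j)) / k.factorial := by
  rw [Fg, gamma_ratio x k h, mul_comm ((k.factorial : ℝ)) _,
    mul_comm (∏ j ∈ Finset.range k, (x - (j:ℝ))) _, mul_div_mul_left _ _ h]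

lemma Fg_eq_of_pos (x : ℝ) (k : ℕ) (h : 0 < x - k + 1) :
    Fg x k = (∏ j ∈ Finset.range k, (x - j)) / k.factorial :=
  Fg_eq_of_ne x k (Real.Gamma_pos_of_pos h).ne'

lemma abs_Fg_le (x : ℝ) (k : ℕ) :
    |Fg x k| ≤ (∏ j ∈ Finset.range k, |x - j|) / k.factorial := by
  by_cases h : Real.Gamma (x - k + 1) = 0
  · rw [Fg, h, mul_zero, div_zero, abs_zero]
    positivity
  · rw [Fg_eq_of_ne x k h, abs_div, abs_prod]
    simp only [Nat.abs_cast]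
    exact le_rfl

lemma prod_add_one_eq (k : ℕ) :
    ∏ j ∈ Finset.range k, ((j : ℝ) + 1) = k.factorial := by
  induction k with
  | zero => simp
  | succ k ih => rw [Finset.prod_range_succ, ih]; push_cast [Nat.factorial_succ]; ring

lemma prod_add_two_eq (k : ℕ) :
    ∏ j ∈ Finset.range k, ((j : ℝ) + 2) = (k+1).factorial := by
  induction k with
  | zero => simp
  | succ k ih => rw [Finset.prod_range_succ, ih]; push_cast [Nat.factorial_succ]; ring

lemma prod_cast_sub (N k : ℕ) (h : k ≤ N) :
    ∏ j ∈ Finset.range k, ((N : ℝ) - j) = (N.descFactorial k : ℝ) := by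
  induction k with
  | zero => simp
  | succ k ih =>
    have hk : k ≤ N := Nat.le_of_succ_le h
    rw [Finset.prod_range_succ, ih hk, Nat.descFactorial_succ]
    push_cast [Nat.cast_sub hk]
    ring

lemma fact_ineq (r : ℕ) (hr : 1 ≤ r) :
    ∀ d : ℕ, 1 ≤ d → (r + 1) * (r.factorial * (d + 1).factorial) ≤ 2 * (r + d).factorial := by
  intro d
  induction d with
  | zero => omega
  | succ d ih =>
    intro _
    rcases Nat.eq_zero_or_pos d with h1 | h1
    · subst h1
      have h2 : (r + 1).factorial = (r+1) * r.factorial := Nat.factorial_succ r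
      simp only [Nat.factorial, Nat.zero_add]
      rw [show r + 1 = (r:ℕ) + 1 from rfl] at h2
      nlinarith [Nat.factorial_pos r]
    · have hd : 1 ≤ d := h1
      have := ih hd
      have h2 : (r + (d+1)).factorial = (r + d + 1) * (r + d).factorial := by
        rw [show r + (d+1) = (r+d) + 1 by ring, Nat.factorial_succ]
      rw [h2, show (d+1+1).factorial = (d+2) * (d+1).factorial by rw [Nat.factorial_succ]]
      calc (r+1) * (r.factorial * ((d+2) * (d+1).factorial))
          = (d+2) * ((r+1) * (r.factorial * (d+1).factorial)) := by ring
        _ ≤ (d+2) * (2 * (r+d).factorial) := Nat.mul_le_mul_left _ this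
        _ ≤ (r+d+1) * (2 * (r+d).factorial) := Nat.mul_le_mul_right _ (by omega)
        _ = 2 * ((r+d+1) * (r+d).factorial) := by ring

lemma Fg_pascal (c : ℝ) (k : ℕ) (h : 0 < c - (k+1)) :
    Fg c (k+1) = Fg (c-1) (k+1) + Fg (c-1) k := by
  have h0 : 0 < c - (k+1:ℕ) + 1 := by push_cast; linarith
  have h1 : 0 < c - 1 - (k+1:ℕ) + 1 := by push_cast; linarith
  have h2 : 0 < c - 1 - (k:ℕ) + 1 := by push_cast; linarith
  rw [Fg_eq_of_pos _ _ h0, Fg_eq_of_pos _ _ h1, Fg_eq_of_pos _ _ h2]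
  have e1 : ∏ j ∈ Finset.range (k+1), (c - j) = c * ∏ j ∈ Finset.range k, (c - 1 - j) := by
    rw [Finset.prod_range_succ']
    simp only [Nat.cast_zero, sub_zero, Nat.cast_add, Nat.cast_one]
    rw [mul_comm]
    congr 1
    exact Finset.prod_congr rfl fun j _ => by push_cast; ring
  have e2 : ∏ j ∈ Finset.range (k+1), (c - 1 - j) =
      (∏ j ∈ Finset.range k, (c - 1 - j)) * (c - 1 - k) := Finset.prod_range_succ _ _
  rw [e1, e2, Nat.factorial_succ]
  have hkf : ((k.factorial : ℝ)) ≠ 0 := by positivity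
  have hkf2 : ((k:ℝ) + 1) ≠ 0 := by positivity
  push_cast
  field_simp
  ring

lemma desc_eq_choose (N k : ℕ) (hk : k ≤ N) :
    ∏ j ∈ Finset.range k, ((N:ℝ) - j) = (k.factorial : ℝ) * (N.choose k : ℝ) := by
  rw [prod_cast_sub N k hk, Nat.descFactorial_eq_factorial_mul_choose]
  push_cast; ring

lemma Fg_nonneg_le (x : ℝ) (N k : ℕ) (h1 : (N:ℝ) ≤ x) (h2 : x ≤ (N:ℝ) + 1)
    (hk : k ≤ N) :
    0 ≤ Fg x k ∧ Fg x k ≤ ((N+1).choose k : ℝ) := by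
  have hpos : ∀ j ∈ Finset.range k, (0:ℝ) < x - j := by
    intro j hj
    have : (j:ℝ) ≤ (N:ℝ) - 1 := by
      have : j + 1 ≤ N := by have := Finset.mem_range.mp hj; omega
      have := Nat.cast_le (α := ℝ) |>.mpr this
      push_cast at this; linarith
    linarith
  have h0 : 0 < x - k + 1 := by
    have : (k:ℝ) ≤ N := Nat.cast_le.mpr hk
    linarith
  rw [Fg_eq_of_pos _ _ h0]
  constructor
  · apply div_nonneg _ (by positivity)
    exact Finset.prod_nonneg fun j hj => (hpos j hj).le
  · rw [div_le_iff₀ (by positivity : (0:ℝ) < (k.factorial : ℝ))]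
    have hb : ∏ j ∈ Finset.range k, (x - j) ≤ ∏ j ∈ Finset.range k, (((N+1:ℕ):ℝ) - j) := by
      apply Finset.prod_le_prod (fun j hj => (hpos j hj).le)
      intro j hj
      push_cast
      linarith
    calc ∏ j ∈ Finset.range k, (x - j) ≤ ∏ j ∈ Finset.range k, (((N+1:ℕ):ℝ) - j) := hb
      _ = (k.factorial : ℝ) * ((N+1).choose k : ℝ) := desc_eq_choose (N+1) k (by omega)
      _ = ((N+1).choose k : ℝ) * (k.factorial : ℝ) := by ring

lemma choose_succ_le (R k : ℕ) (hk : k + 1 ≤ R) :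
    (((R+2).choose k : ℕ) : ℝ) ≤ ((R:ℝ)+2)/3 * ((R+1).choose k : ℕ) := by
  have key : (R+2-k) * ((R+2).choose k) = (R+2) * ((R+1).choose k) := by
    have e1 : (R+2).descFactorial (k+1) = (R+2-k) * (R+2).descFactorial k :=
      Nat.descFactorial_succ _ _
    have e2 : (R+2).descFactorial (k+1) = (R+2) * (R+1).descFactorial k :=
      Nat.succ_descFactorial_succ (R+1) k
    have e3 := e1.symm.trans e2
    rw [Nat.descFactorial_eq_factorial_mul_choose, Nat.descFactorial_eq_factorial_mul_choose]
      at e3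
    have hf : 0 < k.factorial := Nat.factorial_pos k
    nlinarith [e3]
  have key' : ((R:ℝ)+2-k) * ((R+2).choose k : ℕ) = ((R:ℝ)+2) * ((R+1).choose k : ℕ) := by
    have := congrArg (fun m : ℕ => (m : ℝ)) key
    push_cast [Nat.cast_sub (by omega : k ≤ R + 2)] at this
    push_cast
    linarith [this]
  have h3 : (3:ℝ) ≤ (R:ℝ)+2-k := by
    have : (k:ℝ) ≤ (R:ℝ) - 1 := by
      have := Nat.cast_le (α := ℝ) |>.mpr hk
      push_cast at this; linarith
    linarith
  have hc : (0:ℝ) ≤ ((R+2).choose k : ℕ) := Nat.cast_nonneg _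
  rw [div_mul_eq_mul_div, le_div_iff₀ (by norm_num : (0:ℝ) < 3)]
  nlinarith [mul_le_mul_of_nonneg_right h3 hc, key']

lemma abs_Fg_a_le (s : ℕ) (α₁ : ℝ) (h1 : -1 < α₁) (h2 : α₁ < 1)
    (d : ℕ) (hd : 1 ≤ d) :
    |Fg ((s:ℝ) + α₁) (s + 1 + d)| ≤ 2 / ((s:ℝ) + 2) := by
  set a := (s:ℝ) + α₁ with ha
  have habs := abs_Fg_le a (s + 1 + d)
  have hsplit : ∏ j ∈ Finset.range (s+1+d), |a - j| =
      ((∏ j ∈ Finset.range s, |a - j|) * |a - s|) * ∏ t ∈ Finset.range d, |a - (s+1+t:ℕ)| := by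
    rw [Finset.prod_range_add, Finset.prod_range_succ]
  have hb1 : ∏ j ∈ Finset.range s, |a - j| ≤ ∏ j ∈ Finset.range s, (((s+1:ℕ):ℝ) - j) := by
    apply Finset.prod_le_prod (fun j _ => abs_nonneg _)
    intro j hj
    have hj' : (j:ℝ) ≤ (s:ℝ) - 1 := by
      have : j + 1 ≤ s := Finset.mem_range.mp hj
      have := Nat.cast_le (α := ℝ) |>.mpr this
      push_cast at this; linarith
    rw [abs_of_pos (by simp only [ha]; linarith)]
    push_cast; simp only [ha]; linarith
  have hb1' : ∏ j ∈ Finset.range s, (((s+1:ℕ):ℝ) - j) = ((s+1).factorial : ℝ) := by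
    rw [desc_eq_choose (s+1) s (by omega), Nat.choose_succ_self_right]
    push_cast [Nat.factorial_succ]
    ring
  have hb2 : |a - (s:ℝ)| ≤ 1 := by
    rw [show a - (s:ℝ) = α₁ by simp only [ha]; ring, abs_le]
    constructor <;> linarith
  have hb3 : ∏ t ∈ Finset.range d, |a - (s+1+t:ℕ)| ≤ ((d+1).factorial : ℝ) := by
    rw [← prod_add_two_eq d]
    apply Finset.prod_le_prod (fun t _ => abs_nonneg _)
    intro t _
    have : a - ((s+1+t:ℕ):ℝ) = α₁ - 1 - t := by push_cast; simp only [ha]; ring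
    rw [this, abs_of_neg (by linarith [Nat.cast_nonneg (α := ℝ) t])]
    have : (0:ℝ) ≤ (t:ℝ) := Nat.cast_nonneg t
    linarith
  have hV : ∏ j ∈ Finset.range (s+1+d), |a - j| ≤
      ((s+1).factorial : ℝ) * ((d+1).factorial : ℝ) := by
    rw [hsplit]
    have hn1 : (0:ℝ) ≤ ∏ j ∈ Finset.range s, |a - j| :=
      Finset.prod_nonneg fun j _ => abs_nonneg _
    have hn3 : (0:ℝ) ≤ ∏ t ∈ Finset.range d, |a - (s+1+t:ℕ)| :=
      Finset.prod_nonneg fun t _ => abs_nonneg _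
    calc (∏ j ∈ Finset.range s, |a - j|) * |a - (s:ℝ)| * ∏ t ∈ Finset.range d, |a - (s+1+t:ℕ)|
        ≤ ((s+1).factorial : ℝ) * 1 * ((d+1).factorial : ℝ) := by
          apply mul_le_mul _ hb3 hn3 (by positivity)
          apply mul_le_mul (le_trans hb1 (le_of_eq hb1')) hb2 (abs_nonneg _) (by positivity)
      _ = ((s+1).factorial : ℝ) * ((d+1).factorial : ℝ) := by ring
  have hfact := fact_ineq (s+1) (by omega) d hd
  have hfactR : ((s:ℝ)+2) * (((s+1).factorial : ℝ) * ((d+1).factorial : ℝ)) ≤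
      2 * ((s+1+d).factorial : ℝ) := by
    have := Nat.cast_le (α := ℝ) |>.mpr hfact
    push_cast at this
    linarith [this]
  calc |Fg a (s+1+d)| ≤ (∏ j ∈ Finset.range (s+1+d), |a - j|) / ((s+1+d).factorial : ℝ) := habs
    _ ≤ (((s+1).factorial : ℝ) * ((d+1).factorial : ℝ)) / ((s+1+d).factorial : ℝ) := by
        gcongr
    _ ≤ 2 / ((s:ℝ)+2) := by
        rw [div_le_div_iff₀ (by positivity) (by positivity)]
        linarith [hfactR]

lemma gfac_bound (r₁ : ℕ) (hr : 2 ≤ r₁) (α₁ : ℝ) (h1 : -1 < α₁) (h2 : α₁ < 1) :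
    Real.Gamma ((r₁:ℝ) + α₁) / (Real.Gamma ((r₁:ℝ)+1) * |Real.Gamma α₁|) * (4 - α₁) ≤ 3 := by
  set g := Real.Gamma ((r₁:ℝ) + α₁) / (Real.Gamma ((r₁:ℝ)+1) * |Real.Gamma α₁|) with hg
  by_cases hz : α₁ = 0
  · simp only [hg, hz, Real.Gamma_zero, abs_zero, mul_zero, div_zero, zero_mul]
    norm_num
  · have hΓne : Real.Gamma α₁ ≠ 0 := by
      apply Real.Gamma_ne_zero
      intro m
      rcases Nat.eq_zero_or_pos m with hm | hm
      · subst hm; simpa using hz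
      · have : (1:ℝ) ≤ (m:ℝ) := by exact_mod_cast hm
        intro he; rw [he] at h1; linarith
    obtain ⟨s, rfl⟩ : ∃ s, r₁ = s + 1 := ⟨r₁ - 1, by omega⟩
    have hcast : ((s+1:ℕ):ℝ) + α₁ = (1 + α₁) + (s:ℕ) := by push_cast; ring
    have hP : Real.Gamma (((s+1:ℕ):ℝ) + α₁)
        = (∏ j ∈ Finset.range s, (1 + α₁ + j)) * Real.Gamma (1 + α₁) := by
      rw [hcast, gamma_prod_add (1+α₁) (by linarith) s]
    have hΓ1 : Real.Gamma (1 + α₁) = α₁ * Real.Gamma α₁ := by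
      rw [show (1:ℝ) + α₁ = α₁ + 1 by ring, Real.Gamma_add_one hz]
    have hfa : Real.Gamma (((s+1:ℕ):ℝ) + 1) = ((s+1).factorial : ℝ) := by
      exact_mod_cast Real.Gamma_nat_eq_factorial (s+1)
    have habs : α₁ * Real.Gamma α₁ = |α₁| * |Real.Gamma α₁| := by
      have hpos : 0 < α₁ * Real.Gamma α₁ := by
        rw [← hΓ1]; exact Real.Gamma_pos_of_pos (by linarith)
      rw [← abs_mul]
      exact (abs_of_pos hpos).symm
    have hgeq : g = |α₁| * (∏ j ∈ Finset.range s, (1 + α₁ + j)) / ((s+1).factorial : ℝ) := by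
      have hane : |Real.Gamma α₁| ≠ 0 := abs_ne_zero.mpr hΓne
      have hfne : ((s+1).factorial : ℝ) ≠ 0 := by positivity
      rw [hg, hP, hΓ1, habs, hfa]
      field_simp
    have hPnn : (0:ℝ) ≤ ∏ j ∈ Finset.range s, (1 + α₁ + j) :=
      Finset.prod_nonneg fun j _ => by have : (0:ℝ) ≤ (j:ℝ) := Nat.cast_nonneg j; linarith
    have hgnn : 0 ≤ g := by rw [hgeq]; positivity
    rcases le_or_gt α₁ 0 with hneg | hpos
    · -- α₁ < 0 : P ≤ (s)!.  g ≤ -α₁ * s!/(s+1)! = -α₁/(s+1) ≤ 1/2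
      have hPle : ∏ j ∈ Finset.range s, (1 + α₁ + j) ≤ (s.factorial : ℝ) := by
        rw [← prod_add_one_eq s]
        apply Finset.prod_le_prod (fun j _ => by
          have : (0:ℝ) ≤ (j:ℝ) := Nat.cast_nonneg j; linarith)
        intro j _; linarith
      have hgle : g ≤ 1/2 := by
        rw [hgeq]
        have hfs : ((s+1).factorial : ℝ) = ((s:ℝ)+1) * (s.factorial : ℝ) := by
          push_cast [Nat.factorial_succ]; ring
        rw [div_le_iff₀ (by positivity), hfs]
        have hs2 : (2:ℝ) ≤ (s:ℝ) + 1 := by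
          have : 1 ≤ s := by omega
          have := Nat.cast_le (α := ℝ) |>.mpr this
          push_cast at this
          linarith
        have ha1 : |α₁| ≤ 1 := by rw [abs_le]; constructor <;> linarith
        have hsf : (0:ℝ) < (s.factorial : ℝ) := by positivity
        nlinarith [mul_le_mul ha1 hPle hPnn (by norm_num : (0:ℝ) ≤ 1)]
      nlinarith [hgnn, hgle]
    · -- α₁ > 0 : P ≤ (s+1)!, g ≤ α₁
      have hPle : ∏ j ∈ Finset.range s, (1 + α₁ + j) ≤ ((s+1).factorial : ℝ) := by
        rw [← prod_add_two_eq s]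
        apply Finset.prod_le_prod (fun j _ => by
          have : (0:ℝ) ≤ (j:ℝ) := Nat.cast_nonneg j; linarith)
        intro j _; linarith
      have hgle : g ≤ α₁ := by
        rw [hgeq, abs_of_pos hpos, div_le_iff₀ (by positivity)]
        nlinarith [hpos, hPle]
      nlinarith [hgnn, hgle]

lemma Fg_a_r1 (r₁ : ℕ) (hr : 1 ≤ r₁) (α₁ : ℝ) (h1 : -1 < α₁) :
    |Fg ((r₁:ℝ) - 1 + α₁) r₁| =
      Real.Gamma ((r₁:ℝ) + α₁) / (Real.Gamma ((r₁:ℝ)+1) * |Real.Gamma α₁|) := by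
  have hr1 : (1:ℝ) ≤ (r₁:ℝ) := by exact_mod_cast hr
  have e1 : (r₁:ℝ) - 1 + α₁ + 1 = (r₁:ℝ) + α₁ := by ring
  have e2 : (r₁:ℝ) - 1 + α₁ - (r₁:ℕ) + 1 = α₁ := by push_cast; ring
  have hfa : Real.Gamma ((r₁:ℝ) + 1) = (r₁.factorial : ℝ) := Real.Gamma_nat_eq_factorial r₁
  rw [Fg, e1, e2, hfa, abs_div, abs_mul, Nat.abs_cast,
    abs_of_pos (Real.Gamma_pos_of_pos (by linarith : (0:ℝ) < (r₁:ℝ) + α₁))]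

lemma Fg_a_r1succ (r₁ : ℕ) (hr : 1 ≤ r₁) (α₁ : ℝ) (h1 : -1 < α₁) (h2 : α₁ < 1) :
    |Fg ((r₁:ℝ) - 1 + α₁) (r₁+1)| =
      (Real.Gamma ((r₁:ℝ) + α₁) / (Real.Gamma ((r₁:ℝ)+1) * |Real.Gamma α₁|))
        * ((1 - α₁)/((r₁:ℝ)+1)) := by
  have hr1 : (1:ℝ) ≤ (r₁:ℝ) := by exact_mod_cast hr
  have e1 : (r₁:ℝ) - 1 + α₁ + 1 = (r₁:ℝ) + α₁ := by ring
  have e2 : (r₁:ℝ) - 1 + α₁ - ((r₁+1:ℕ):ℝ) + 1 = α₁ - 1 := by push_cast; ring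
  have hΓ : Real.Gamma α₁ = (α₁ - 1) * Real.Gamma (α₁ - 1) := by
    have h := Real.Gamma_add_one (s := α₁ - 1) (sub_ne_zero.mpr h2.ne)
    rw [sub_add_cancel] at h
    exact h
  have habs : |Real.Gamma α₁| = (1 - α₁) * |Real.Gamma (α₁ - 1)| := by
    rw [hΓ, abs_mul, abs_of_neg (by linarith : α₁ - 1 < 0)]
    ring_nf
  have hfa : Real.Gamma ((r₁:ℝ) + 1) = (r₁.factorial : ℝ) := Real.Gamma_nat_eq_factorial r₁
  have hGpos := Real.Gamma_pos_of_pos (by linarith : (0:ℝ) < (r₁:ℝ) + α₁)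
  rw [Fg, e1, e2, habs, hfa, abs_div, abs_mul, Nat.abs_cast, abs_of_pos hGpos]
  by_cases hG1 : |Real.Gamma (α₁ - 1)| = 0
  · rw [hG1]
    simp
  · have hfact : ((r₁+1).factorial : ℝ) = ((r₁:ℝ)+1) * (r₁.factorial : ℝ) := by
      push_cast [Nat.factorial_succ]; ring
    have hne1 : (1:ℝ) - α₁ ≠ 0 := sub_ne_zero.mpr (ne_of_gt (by linarith))
    have hne2 : ((r₁:ℝ)+1) ≠ 0 := by positivity
    have hne3 : ((r₁).factorial : ℝ) ≠ 0 := by positivity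
    rw [hfact]
    field_simp

lemma abs_Fg_a_le' (r₁ : ℕ) (hr : 1 ≤ r₁) (α₁ : ℝ) (h1 : -1 < α₁) (h2 : α₁ < 1)
    (d : ℕ) (hd : 1 ≤ d) : |Fg ((r₁:ℝ) - 1 + α₁) (r₁ + d)| ≤ 2 / ((r₁:ℝ) + 1) := by
  obtain ⟨s, rfl⟩ : ∃ s, r₁ = s + 1 := ⟨r₁ - 1, by omega⟩
  have h := abs_Fg_a_le s α₁ h1 h2 d hd
  have e : ((s+1:ℕ):ℝ) - 1 + α₁ = (s:ℝ) + α₁ := by push_cast; ring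
  have e2 : ((s+1:ℕ):ℝ) + 1 = (s:ℝ) + 2 := by push_cast; ring
  rw [e, e2]
  exact h

set_option maxHeartbeats 2000000 in
theorem delta5_lower_bound (n : ℕ) (hn : 4 ≤ n) (r₁ r₂ r₃ : ℕ)
    (hr : r₁ + r₂ + r₃ = n - 1) (α₁ α₂ α₃ : ℝ)
    (hα₁ : -1 < α₁) (hα₁' : α₁ < 1)
    (hα₂ : 0 ≤ α₂) (hα₂' : α₂ < 1) (hα₃ : 0 ≤ α₃) (hα₃' : α₃ < 1)
    (hs : α₁ + α₂ + α₃ = 1)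
    (h12 : (r₁:ℝ) - 1 + α₁ ≥ (r₂:ℝ) + α₂) (h13 : (r₁:ℝ) - 1 + α₁ ≥ (r₃:ℝ) + 1 + α₃) :
    S5 n (r₁, r₂, r₃) (((r₁:ℝ) + α₁)/n, ((r₂:ℝ) + α₂)/n, ((r₃:ℝ) + α₃)/n)
      - S5 n (r₁ - 1, r₂, r₃ + 1)
          (((r₁:ℝ) - 1 + α₁)/n, ((r₂:ℝ) + α₂)/n, ((r₃:ℝ) + 1 + α₃)/n)
      ≥ -(∑ i₂ ∈ Finset.Icc (r₂ + 1) (n - r₁ - 1),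
            |Real.Gamma ((r₂:ℝ) + α₂ + 1) / (i₂.factorial * Real.Gamma ((r₂:ℝ) + α₂ + 1 - i₂))|
              * ∑ i₃ ∈ Finset.range (n - r₁ - i₂), ((r₃ + 1).choose i₃ : ℝ))
        - ∑ i₂ ∈ Finset.Icc (r₂ + 1) (n - r₁),
            |Real.Gamma ((r₂:ℝ) + α₂ + 1) / (i₂.factorial * Real.Gamma ((r₂:ℝ) + α₂ + 1 - i₂))|
              * genBinom ((r₃:ℝ) + α₃) ((n:ℝ) - r₁ - i₂)
              * (Real.Gamma ((r₁:ℝ) + α₁) / (Real.Gamma ((r₁:ℝ) + 1) * |Real.Gamma α₁|)) := by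
  have hn0 : (n:ℝ) ≠ 0 := Nat.cast_ne_zero.mpr (by omega)
  have hr31 : r₃ + 2 ≤ r₁ := by
    by_contra hcon
    push_neg at hcon
    have : (r₁:ℝ) ≤ (r₃:ℝ) + 1 := by exact_mod_cast Nat.lt_succ_iff.mp (by omega)
    linarith
  have hnn : n = r₁ + r₂ + r₃ + 1 := by omega
  set a := (r₁:ℝ) - 1 + α₁ with ha
  set b := (r₂:ℝ) + α₂ with hb
  set c := (r₃:ℝ) + 1 + α₃ with hc
  set gfac := Real.Gamma ((r₁:ℝ) + α₁) / (Real.Gamma ((r₁:ℝ) + 1) * |Real.Gamma α₁|) with hgfac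
  have hS1 : 0 ≤ S5 n (r₁, r₂, r₃) (((r₁:ℝ) + α₁)/n, b/n, ((r₃:ℝ) + α₃)/n) := by
    apply Finset.sum_nonneg
    intro i₂ _
    exact Finset.sum_nonneg fun i₃ _ => abs_nonneg _
  have hlag : ∀ p q s : ℕ, |lagPoly n (a/n, b/n, c/n) (p, q, s)| =
      |Fg b q| * (|Fg a p| * |Fg c s|) := by
    intro p q s
    have h1 : (n:ℝ) * (a / n) = a := mul_div_cancel₀ a hn0
    have h2 : (n:ℝ) * (b / n) = b := mul_div_cancel₀ b hn0
    have h3 : (n:ℝ) * (c / n) = c := mul_div_cancel₀ c hn0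
    simp only [lagPoly, Fg, h1, h2, h3]
    rw [abs_mul, abs_mul]
    ring
  have key : S5 n (r₁ - 1, r₂, r₃ + 1) (a/n, b/n, c/n) ≤
      (∑ i₂ ∈ Finset.Icc (r₂ + 1) (n - r₁ - 1),
        |Fg b i₂| * ∑ i₃ ∈ Finset.range (n - r₁ - i₂), ((r₃ + 1).choose i₃ : ℝ))
      + ∑ i₂ ∈ Finset.Icc (r₂ + 1) (n - r₁),
          |Fg b i₂| * genBinom ((r₃:ℝ) + α₃) ((n:ℝ) - r₁ - i₂) * gfac := by
    simp only [S5]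
    have e1 : n - (r₁ - 1) - 1 = n - r₁ := by omega
    rw [e1]
    have hsum : ∀ i₂ ∈ Finset.Icc (r₂+1) (n - r₁),
        (∑ i₃ ∈ Finset.range (n - (r₁-1) - i₂),
          |lagPoly n (a/n, b/n, c/n) (n - i₂ - i₃, i₂, i₃)|)
        = |Fg b i₂| * ∑ i₃ ∈ Finset.range (n - r₁ - i₂ + 1), |Fg a (n - i₂ - i₃)| * |Fg c i₃| := by
      intro i₂ hi₂
      have hi₂' := Finset.mem_Icc.mp hi₂
      have e2 : n - (r₁-1) - i₂ = n - r₁ - i₂ + 1 := by omega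
      rw [e2, Finset.mul_sum]
      exact Finset.sum_congr rfl fun i₃ _ => hlag _ _ _
    rw [Finset.sum_congr rfl hsum]
    have hins : Finset.Icc (r₂+1) (n-r₁) = insert (n-r₁) (Finset.Icc (r₂+1) (n-r₁-1)) := by
      ext x
      simp only [Finset.mem_Icc, Finset.mem_insert]
      omega
    have hnotmem : (n-r₁) ∉ Finset.Icc (r₂+1) (n-r₁-1) := by
      simp only [Finset.mem_Icc]
      omega
    rw [hins, Finset.sum_insert hnotmem, Finset.sum_insert hnotmem]
    have h_top : |Fg b (n-r₁)| * ∑ i₃ ∈ Finset.range (n - r₁ - (n-r₁) + 1),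
          |Fg a (n - (n-r₁) - i₃)| * |Fg c i₃|
        ≤ |Fg b (n-r₁)| * genBinom ((r₃:ℝ) + α₃) ((n:ℝ) - r₁ - (n-r₁:ℕ)) * gfac := by
      have er : n - r₁ - (n-r₁) + 1 = 1 := by omega
      have hcpos : (0:ℝ) < c + 1 := by
        have := Nat.cast_nonneg (α := ℝ) r₃
        rw [hc]; linarith
      have hc'pos : (0:ℝ) < (r₃:ℝ) + α₃ + 1 := by
        have := Nat.cast_nonneg (α := ℝ) r₃
        linarith
      rw [er, Finset.sum_range_one, show n - (n-r₁) - 0 = r₁ by omega]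
      have hc0 : |Fg c 0| = 1 := by
        rw [Fg]
        simp only [Nat.factorial_zero, Nat.cast_one, Nat.cast_zero, sub_zero, one_mul]
        rw [div_self (ne_of_gt (Real.Gamma_pos_of_pos hcpos))]
        norm_num
      have egb : (n:ℝ) - (r₁:ℝ) - ((n - r₁ : ℕ):ℝ) = 0 := by
        push_cast [Nat.cast_sub (show r₁ ≤ n by omega)]
        ring
      have hgb1 : genBinom ((r₃:ℝ) + α₃) ((n:ℝ) - (r₁:ℝ) - ((n - r₁ : ℕ):ℝ)) = 1 := by
        rw [egb, genBinom]
        simp only [zero_add, Real.Gamma_one, sub_zero, one_mul]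
        exact div_self (ne_of_gt (Real.Gamma_pos_of_pos hc'pos))
      have hA0 : |Fg a r₁| = gfac := by
        rw [ha, Fg_a_r1 r₁ (by omega) α₁ hα₁]
      rw [hc0, hgb1, hA0]
      apply le_of_eq
      ring
    have h_each : ∀ i₂ ∈ Finset.Icc (r₂+1) (n-r₁-1),
        |Fg b i₂| * ∑ i₃ ∈ Finset.range (n - r₁ - i₂ + 1), |Fg a (n - i₂ - i₃)| * |Fg c i₃|
        ≤ |Fg b i₂| * ∑ i₃ ∈ Finset.range (n - r₁ - i₂), ((r₃ + 1).choose i₃ : ℝ)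
          + |Fg b i₂| * genBinom ((r₃:ℝ) + α₃) ((n:ℝ) - r₁ - i₂) * gfac := by
      intro i₂ hi₂
      have hi₂' := Finset.mem_Icc.mp hi₂
      obtain ⟨k, hk⟩ : ∃ k, n - r₁ - i₂ = k + 1 := ⟨n - r₁ - i₂ - 1, by omega⟩
      have hkr : k + 1 ≤ r₃ := by omega
      have hkrR : (k:ℝ) + 1 ≤ (r₃:ℝ) := by exact_mod_cast hkr
      have hr31R : (r₃:ℝ) + 2 ≤ (r₁:ℝ) := by exact_mod_cast hr31
      have hr3nn : (0:ℝ) ≤ (r₃:ℝ) := Nat.cast_nonneg r₃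
      have hgnn : 0 ≤ gfac := by
        rw [hgfac]
        have h2r : (2:ℝ) ≤ (r₁:ℝ) := by exact_mod_cast (by omega : 2 ≤ r₁)
        exact div_nonneg (Real.Gamma_pos_of_pos (by linarith)).le
          (mul_nonneg (Real.Gamma_pos_of_pos (by linarith)).le (abs_nonneg _))
      have hmr : (n:ℝ) - (r₁:ℝ) - (i₂:ℝ) = ((k+1:ℕ):ℝ) := by
        have h1 : r₁ + i₂ ≤ n := by omega
        have := congrArg (fun m : ℕ => (m:ℝ)) hk
        push_cast [Nat.cast_sub (show i₂ ≤ n - r₁ by omega),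
          Nat.cast_sub (show r₁ ≤ n by omega)] at this
        push_cast
        linarith
      have hgen : genBinom ((r₃:ℝ) + α₃) ((n:ℝ) - (r₁:ℝ) - (i₂:ℝ)) = Fg (c-1) (k+1) := by
        rw [hmr, genBinom, Fg, Real.Gamma_nat_eq_factorial]
        have e1 : (r₃:ℝ) + α₃ + 1 = c - 1 + 1 := by rw [hc]; ring
        have e2 : (r₃:ℝ) + α₃ - ((k+1:ℕ):ℝ) + 1 = c - 1 - ((k+1:ℕ):ℝ) + 1 := by rw [hc]; ring
        rw [e1, e2]
      have hidx : ∀ i₃ ∈ Finset.range (n - r₁ - i₂ + 1),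
          |Fg a (n - i₂ - i₃)| * |Fg c i₃| = |Fg a (r₁ + (k + 1 - i₃))| * |Fg c i₃| := by
        intro i₃ hi₃
        have : i₃ ≤ k + 1 := by
          have := Finset.mem_range.mp hi₃; omega
        rw [show n - i₂ - i₃ = r₁ + (k + 1 - i₃) by omega]
      rw [Finset.sum_congr rfl hidx, hgen, hk]
      have core : ∑ i₃ ∈ Finset.range (k+1+1), |Fg a (r₁ + (k + 1 - i₃))| * |Fg c i₃|
          ≤ (∑ i₃ ∈ Finset.range (k+1), ((r₃ + 1).choose i₃ : ℝ)) + Fg (c-1) (k+1) * gfac := by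
        rw [Finset.sum_range_succ, Finset.sum_range_succ _ k, Finset.sum_range_succ _ k]
        have hpartα : ∀ i₃ ∈ Finset.range k,
            |Fg a (r₁ + (k + 1 - i₃))| * |Fg c i₃| ≤ ((r₃ + 1).choose i₃ : ℝ) := by
          intro i₃ hi₃
          have hi₃' : i₃ < k := Finset.mem_range.mp hi₃
          have hd : 1 ≤ k + 1 - i₃ := by omega
          have h1b := abs_Fg_a_le' r₁ (by omega) α₁ hα₁ hα₁' (k + 1 - i₃) hd
          rw [← ha] at h1b
          have h2b := Fg_nonneg_le c (r₃+1) i₃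
            (by push_cast [hc]; linarith) (by push_cast [hc]; linarith) (by omega)
          have h3b := choose_succ_le r₃ i₃ (by omega)
          have hC : (0:ℝ) ≤ ((r₃+1).choose i₃ : ℝ) := Nat.cast_nonneg _
          calc |Fg a (r₁ + (k + 1 - i₃))| * |Fg c i₃|
              ≤ (2/((r₁:ℝ)+1)) * (((r₃:ℝ)+2)/3 * ((r₃+1).choose i₃ : ℝ)) := by
                apply mul_le_mul h1b _ (abs_nonneg _) (by positivity)
                rw [abs_of_nonneg h2b.1]
                calc Fg c i₃ ≤ (((r₃+1)+1).choose i₃ : ℝ) := h2b.2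
                  _ = (((r₃+2)).choose i₃ : ℝ) := by norm_num
                  _ ≤ ((r₃:ℝ)+2)/3 * ((r₃+1).choose i₃ : ℝ) := h3b
            _ ≤ ((r₃+1).choose i₃ : ℝ) := by
                have h23 : 2/((r₁:ℝ)+1) * (((r₃:ℝ)+2)/3) ≤ 1 := by
                  rw [div_mul_div_comm]
                  apply div_le_one_of_le₀ (by nlinarith) (by positivity)
                calc 2/((r₁:ℝ)+1) * (((r₃:ℝ)+2)/3 * ((r₃+1).choose i₃ : ℝ))
                    = (2/((r₁:ℝ)+1) * (((r₃:ℝ)+2)/3)) * ((r₃+1).choose i₃ : ℝ) := by ring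
                  _ ≤ 1 * ((r₃+1).choose i₃ : ℝ) := mul_le_mul_of_nonneg_right h23 hC
                  _ = ((r₃+1).choose i₃ : ℝ) := one_mul _
        have hsumα := Finset.sum_le_sum hpartα
        have hhead : |Fg a (r₁ + (k + 1 - k))| * |Fg c k|
              + |Fg a (r₁ + (k + 1 - (k+1)))| * |Fg c (k+1)|
            ≤ ((r₃ + 1).choose k : ℝ) + Fg (c-1) (k+1) * gfac := by
          rw [show k + 1 - k = 1 by omega, show k + 1 - (k+1) = 0 by omega,
            show r₁ + 0 = r₁ by omega]
          have hA0 : |Fg a r₁| = gfac := by rw [ha, Fg_a_r1 r₁ (by omega) α₁ hα₁]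
          have hA1 : |Fg a (r₁+1)| = gfac * ((1 - α₁)/((r₁:ℝ)+1)) := by
            rw [ha, Fg_a_r1succ r₁ (by omega) α₁ hα₁ hα₁', hgfac]
          have hCk := Fg_nonneg_le c (r₃+1) k
            (by push_cast [hc]; linarith) (by push_cast [hc]; linarith) (by omega)
          have hCk1 := Fg_nonneg_le c (r₃+1) (k+1)
            (by push_cast [hc]; linarith) (by push_cast [hc]; linarith) (by omega)
          have hQk := Fg_nonneg_le (c-1) r₃ k
            (by push_cast [hc]; linarith) (by push_cast [hc]; linarith) (by omega)
          have hQk1 := Fg_nonneg_le (c-1) r₃ (k+1)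
            (by push_cast [hc]; linarith) (by push_cast [hc]; linarith) (by omega)
          have hpas : Fg c (k+1) = Fg (c-1) (k+1) + Fg (c-1) k := by
            apply Fg_pascal c k
            rw [hc]; push_cast; linarith
          have h3b := choose_succ_le r₃ k (by omega)
          have hCh : (0:ℝ) ≤ ((r₃+1).choose k : ℝ) := Nat.cast_nonneg _
          have hFckle : Fg c k ≤ ((r₃:ℝ)+2)/3 * ((r₃+1).choose k : ℝ) := by
            calc Fg c k ≤ (((r₃+1)+1).choose k : ℝ) := hCk.2
              _ = ((r₃+2).choose k : ℝ) := by norm_num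
              _ ≤ ((r₃:ℝ)+2)/3 * ((r₃+1).choose k : ℝ) := h3b
          rw [hA0, hA1, abs_of_nonneg hCk.1, abs_of_nonneg hCk1.1, hpas]
          -- goal : gfac * ((1-α₁)/(r₁+1)) * Fg c k + gfac * (Fg (c-1) (k+1) + Fg (c-1) k)
          --        ≤ choose + Fg (c-1) (k+1) * gfac
          have hu : (1 - α₁)/((r₁:ℝ)+1) * Fg c k ≤ (1 - α₁)/3 * ((r₃+1).choose k : ℝ) := by
            have h1 : (1 - α₁)/((r₁:ℝ)+1) * Fg c k
                ≤ (1 - α₁)/((r₁:ℝ)+1) * (((r₃:ℝ)+2)/3 * ((r₃+1).choose k : ℝ)) :=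
              mul_le_mul_of_nonneg_left hFckle (div_nonneg (by linarith) (by positivity))
            have h2 : (1 - α₁)/((r₁:ℝ)+1) * (((r₃:ℝ)+2)/3 * ((r₃+1).choose k : ℝ))
                ≤ (1 - α₁)/3 * ((r₃+1).choose k : ℝ) := by
              have hr1pos : (0:ℝ) < (r₁:ℝ) + 1 := by positivity
              rw [div_mul_eq_mul_div (1-α₁) ((r₁:ℝ)+1)
                  (((r₃:ℝ)+2)/3 * ((r₃+1).choose k : ℝ)), div_le_iff₀ hr1pos]
              nlinarith [mul_nonneg (mul_nonneg (by linarith : (0:ℝ) ≤ 1 - α₁) hCh)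
                (by linarith : (0:ℝ) ≤ (r₁:ℝ) + 1 - ((r₃:ℝ) + 2))]
            linarith
          have hgb : gfac * (4 - α₁) ≤ 3 := by
            rw [hgfac]
            exact gfac_bound r₁ (by omega) α₁ hα₁ hα₁'
          have hfin : gfac * ((4 - α₁)/3 * ((r₃+1).choose k : ℝ))
              ≤ ((r₃+1).choose k : ℝ) := by
            have h1 := mul_le_mul_of_nonneg_right hgb hCh
            have h2 : gfac * ((4 - α₁)/3 * ((r₃+1).choose k : ℝ))
                = gfac * (4 - α₁) * ((r₃+1).choose k : ℝ) / 3 := by ring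
            rw [h2]
            linarith [h1]
          have hcomb := mul_le_mul_of_nonneg_left (add_le_add hu hQk.2) hgnn
          have hexp : gfac * ((1 - α₁)/3 * ((r₃+1).choose k : ℝ) + ((r₃+1).choose k : ℝ))
              = gfac * ((4 - α₁)/3 * ((r₃+1).choose k : ℝ)) := by ring
          have hgoal2 : gfac * ((1 - α₁)/((r₁:ℝ)+1) * Fg c k + Fg (c-1) k)
              ≤ ((r₃+1).choose k : ℝ) := by
            calc gfac * ((1 - α₁)/((r₁:ℝ)+1) * Fg c k + Fg (c-1) k)
                ≤ gfac * ((1 - α₁)/3 * ((r₃+1).choose k : ℝ) + ((r₃+1).choose k : ℝ)) := hcomb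
              _ ≤ ((r₃+1).choose k : ℝ) := by rw [hexp]; exact hfin
          have hE2 : gfac * ((1 - α₁)/((r₁:ℝ)+1) * Fg c k + Fg (c-1) k)
              = gfac * ((1 - α₁)/((r₁:ℝ)+1)) * Fg c k + gfac * Fg (c-1) k := by ring
          have hE3 : gfac * (Fg (c-1) (k+1) + Fg (c-1) k)
              = gfac * Fg (c-1) k + Fg (c-1) (k+1) * gfac := by ring
          linarith [hgoal2, hE2, hE3]
        linarith [hsumα, hhead]
      calc |Fg b i₂| * ∑ i₃ ∈ Finset.range (k+1+1), |Fg a (r₁ + (k + 1 - i₃))| * |Fg c i₃|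
          ≤ |Fg b i₂| * ((∑ i₃ ∈ Finset.range (k+1), ((r₃ + 1).choose i₃ : ℝ))
              + Fg (c-1) (k+1) * gfac) := mul_le_mul_of_nonneg_left core (abs_nonneg _)
        _ = |Fg b i₂| * (∑ i₃ ∈ Finset.range (k+1), ((r₃ + 1).choose i₃ : ℝ))
              + |Fg b i₂| * Fg (c-1) (k+1) * gfac := by ring
    have hsum_le := Finset.sum_le_sum h_each
    rw [Finset.sum_add_distrib] at hsum_le
    linarith [hsum_le, h_top]
  have hconv : (∑ i₂ ∈ Finset.Icc (r₂ + 1) (n - r₁ - 1),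
        |Real.Gamma (b + 1) / (i₂.factorial * Real.Gamma (b + 1 - i₂))|
          * ∑ i₃ ∈ Finset.range (n - r₁ - i₂), ((r₃ + 1).choose i₃ : ℝ))
      = ∑ i₂ ∈ Finset.Icc (r₂ + 1) (n - r₁ - 1),
        |Fg b i₂| * ∑ i₃ ∈ Finset.range (n - r₁ - i₂), ((r₃ + 1).choose i₃ : ℝ) := by
    apply Finset.sum_congr rfl
    intro i₂ _
    congr 2
    rw [Fg]
    congr 2
    ring
  have hconv2 : (∑ i₂ ∈ Finset.Icc (r₂ + 1) (n - r₁),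
        |Real.Gamma (b + 1) / (i₂.factorial * Real.Gamma (b + 1 - i₂))|
          * genBinom ((r₃:ℝ) + α₃) ((n:ℝ) - r₁ - i₂) * gfac)
      = ∑ i₂ ∈ Finset.Icc (r₂ + 1) (n - r₁),
          |Fg b i₂| * genBinom ((r₃:ℝ) + α₃) ((n:ℝ) - r₁ - i₂) * gfac := by
    apply Finset.sum_congr rfl
    intro i₂ _
    congr 3
    rw [Fg]
    congr 2
    ring
  rw [hconv, hconv2]
  linarith [hS1, key]
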